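/- Let Λ be countable, (κ_λ)_λ ∈ (0,∞)^Λ with sup_λ κ_λ < ∞, and let (φ_α)_{α>0} be a non-linear regularizing filter satisfying Assumption C with parameter γ and contraction factors ℓ_α ∈ (0,1). Then: (Existence) for every α > 0 and every z ∈ ℓ²(Λ), the family (φ_α(κ_λ, z_λ)/κ_λ)_λ belongs to ℓ²(Λ); (Stability) for fixed α > 0, if z^k → z in ℓ²(Λ), then (φ_α(κ_λ, z^k_λ)/κ_λ)_λ → (φ_α(κ_λ, z_λ)/κ_λ)_λ in norm; (Convergence) if z = (κ_λ c⁺_λ)_λ for some c⁺ ∈ ℓ²(Λ), for every α > 0 there exists w ∈ ℓ²(Λ) with φ_α(κ_λ, w_λ) = z_λ for all λ, ‖z^k − z‖ ≤ δ_k with δ_k → 0, α_k → 0, and there is c > 0 with (1 − ℓ_{α_k})/ℓ_{α_k} ≥ c·δ_k for all k, then (φ_{α_k}(κ_λ, z^k_λ)/κ_λ)_λ converges weakly to c⁺ in ℓ²(Λ). -/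

import Mathlib

open scoped ENNReal RealInnerProductSpace
open Filter

noncomputable section

/-- A non-linear regularizing filter: `φ α κ` is (F1) monotone, (F2) nonexpansive,
(F3) zero at zero, and (F4) converges pointwise to the identity as `α → 0`. -/
def IsRegFilter (φ : ℝ → ℝ → ℝ → ℝ) : Prop :=
  (∀ α > (0 : ℝ), ∀ κ > (0 : ℝ), Monotone (φ α κ)) ∧
  (∀ α > (0 : ℝ), ∀ κ > (0 : ℝ), ∀ x y : ℝ, |φ α κ x - φ α κ y| ≤ |x - y|) ∧
  (∀ α > (0 : ℝ), ∀ κ > (0 : ℝ), φ α κ 0 = 0) ∧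
  (∀ κ > (0 : ℝ), ∀ c : ℝ,
    Tendsto (fun α => φ α κ c) (nhdsWithin 0 (Set.Ioi 0)) (nhds c))

/-- Assumption B: (B1) `α ↦ |φ_α(κ,x)|` increases as `α` decreases, and (B2) there are
`d, e > 0` with `|φ_α(κ,x)| ≤ (eκ/√α)·|x|` whenever `|x| ≤ dα/κ`. -/
def AssumptionB (φ : ℝ → ℝ → ℝ → ℝ) : Prop :=
  (∀ κ > (0 : ℝ), ∀ x : ℝ, ∀ α β : ℝ, 0 < α → α ≤ β → |φ β κ x| ≤ |φ α κ x|) ∧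
  (∃ d > (0 : ℝ), ∃ e > (0 : ℝ), ∀ κ > (0 : ℝ), ∀ α > (0 : ℝ), ∀ x : ℝ,
    |x| ≤ d * α / κ → |φ α κ x| ≤ e * κ / Real.sqrt α * |x|)

lemma memlp_two_of_abs_le {Λ : Type*} {f g : Λ → ℝ} (hg : Memℓp g 2)
    (h : ∀ l, |f l| ≤ |g l|) : Memℓp f 2 := by
  have hp : (0:ℝ) < (2:ℝ≥0∞).toReal := by norm_num
  refine memℓp_gen ?_
  refine (hg.summable hp).of_nonneg_of_le (fun l => ?_) (fun l => ?_)
  · positivity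
  · exact Real.rpow_le_rpow (norm_nonneg _) (by simpa [Real.norm_eq_abs] using h l) (by norm_num)

lemma lp_norm_le_of_abs_le {Λ : Type*} (u v : lp (fun _ : Λ => ℝ) 2)
    (h : ∀ l, |u l| ≤ |v l|) : ‖u‖ ≤ ‖v‖ := by
  have hp : (0:ℝ) < (2:ℝ≥0∞).toReal := by norm_num
  rw [lp.norm_eq_tsum_rpow hp, lp.norm_eq_tsum_rpow hp]
  refine Real.rpow_le_rpow (tsum_nonneg fun l => Real.rpow_nonneg (norm_nonneg _) _)
    ?_ (by positivity)
  exact Summable.tsum_le_tsum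
    (fun l => Real.rpow_le_rpow (norm_nonneg _) (by simpa [Real.norm_eq_abs] using h l) hp.le)
    ((lp.memℓp u).summable hp) ((lp.memℓp v).summable hp)

/-- **PnP-type existence, stability and convergence under Assumption C.**
Under Assumption C: (Existence) the filtered coefficients always lie in `ℓ²(Λ)`;
(Stability) for fixed `α > 0` the reconstruction map is norm-to-norm continuous;
(Convergence) for exact data `z = (κ_λ c⁺_λ)_λ` in the range of every `Φ_{α,κ}`, noisy data
`‖z^k − z‖ ≤ δ_k → 0` and parameters `α_k → 0` with `(1 − ℓ_{α_k})/ℓ_{α_k} ≥ c·δ_k`, the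
reconstructions converge weakly to `c⁺`. -/
theorem statement13 {Λ : Type*} [Countable Λ] [Nonempty Λ]
    (κ : Λ → ℝ) (hκ : ∀ l, 0 < κ l) (hκbd : BddAbove (Set.range fun l => κ l ^ 2))
    (φ : ℝ → ℝ → ℝ → ℝ) (hfilter : IsRegFilter φ)
    (γ : ℝ) (hγ0 : 0 < γ) (hγ1 : γ < 1 / sSup (Set.range fun l => κ l ^ 2))
    (ℓ : ℝ → ℝ) (hℓ : ∀ α > (0 : ℝ), 0 < ℓ α ∧ ℓ α < 1)
    (hC1 : ∀ α > (0 : ℝ), ∀ l : Λ, ∀ x y : ℝ,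
      |φ α (κ l) x - φ α (κ l) y| ≤
        γ * κ l ^ 2 * ℓ α / (1 - ℓ α * (1 - γ * κ l ^ 2)) * |x - y|)
    (hC2 : ∃ C : ℝ, 1 ≤ C ∧ ∀ l : Λ, ∀ α > (0 : ℝ), C ≤ 1 / (1 - ℓ α) →
      ∀ x : ℝ, γ * κ l ^ 2 * (1 - C * (1 - ℓ α)) /
          (1 - (1 - C * (1 - ℓ α)) * (1 - γ * κ l ^ 2)) * |x| ≤ |φ α (κ l) x|) :
    ∃ hmem : ∀ α : ℝ, 0 < α → ∀ z : lp (fun _ : Λ => ℝ) 2,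
        Memℓp (fun l => φ α (κ l) (z l) / κ l) 2,
      -- Stability
      (∀ (α : ℝ) (hα : 0 < α) (z : lp (fun _ : Λ => ℝ) 2) (zk : ℕ → lp (fun _ : Λ => ℝ) 2),
        Tendsto (fun k => ‖zk k - z‖) atTop (nhds 0) →
        Tendsto
          (fun k =>
            ‖(⟨fun l => φ α (κ l) (zk k l) / κ l, hmem α hα (zk k)⟩ : lp (fun _ : Λ => ℝ) 2) -
              (⟨fun l => φ α (κ l) (z l) / κ l, hmem α hα z⟩ : lp (fun _ : Λ => ℝ) 2)‖)
          atTop (nhds 0)) ∧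
      -- Convergence
      (∀ (z cplus : lp (fun _ : Λ => ℝ) 2), (∀ l, z l = κ l * cplus l) →
        (∀ α > (0 : ℝ), ∃ w : lp (fun _ : Λ => ℝ) 2, ∀ l, φ α (κ l) (w l) = z l) →
        ∀ (zk : ℕ → lp (fun _ : Λ => ℝ) 2) (δ αs : ℕ → ℝ) (hαpos : ∀ k, 0 < αs k),
          (∀ k, ‖zk k - z‖ ≤ δ k) →
          Tendsto δ atTop (nhds 0) → Tendsto αs atTop (nhds 0) →
          (∃ c > (0 : ℝ), ∀ k, c * δ k ≤ (1 - ℓ (αs k)) / ℓ (αs k)) →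
          ∀ w : lp (fun _ : Λ => ℝ) 2,
            Tendsto
              (fun k =>
                ⟪(⟨fun l => φ (αs k) (κ l) (zk k l) / κ l, hmem (αs k) (hαpos k) (zk k)⟩ :
                  lp (fun _ : Λ => ℝ) 2), w⟫)
              atTop (nhds ⟪cplus, w⟫)) := by
  classical
  obtain ⟨h1, h2, h3, h4⟩ := hfilter
  set K2 := sSup (Set.range fun l => κ l ^ 2) with hK2def
  obtain ⟨l0⟩ := ‹Nonempty Λ›
  have hκle : ∀ l, κ l ^ 2 ≤ K2 := fun l => le_csSup hκbd ⟨l, rfl⟩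
  have hK2pos : (0:ℝ) < K2 := lt_of_lt_of_le (pow_pos (hκ l0) 2) (hκle l0)
  set K := Real.sqrt K2 with hKdef
  have hKpos : 0 < K := Real.sqrt_pos.mpr hK2pos
  have hκK : ∀ l, κ l ≤ K := fun l => by
    have := Real.sqrt_le_sqrt (hκle l)
    rwa [Real.sqrt_sq (hκ l).le] at this
  set M : ℝ → ℝ := fun α => γ * K * ℓ α / (1 - ℓ α) with hMdef
  have hMnn : ∀ α, 0 < α → 0 ≤ M α := by
    intro α hα
    obtain ⟨hl0, hl1⟩ := hℓ α hα
    have hd : (0:ℝ) < 1 - ℓ α := by linarith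
    have hnum : 0 ≤ γ * K * ℓ α := by positivity
    exact div_nonneg hnum hd.le
  -- the key Lipschitz estimate
  have key : ∀ α, 0 < α → ∀ l (x y : ℝ),
      |φ α (κ l) x - φ α (κ l) y| ≤ M α * (κ l * |x - y|) := by
    intro α hα l x y
    obtain ⟨hl0, hl1⟩ := hℓ α hα
    have hden : (0:ℝ) < 1 - ℓ α := by linarith
    have hden2 : 1 - ℓ α ≤ 1 - ℓ α * (1 - γ * κ l ^ 2) := by
      nlinarith [mul_pos (mul_pos hl0 hγ0) (pow_pos (hκ l) 2)]
    refine le_trans (hC1 α hα l x y) ?_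
    have hq : γ * κ l ^ 2 * ℓ α / (1 - ℓ α * (1 - γ * κ l ^ 2)) ≤
        γ * K * ℓ α * κ l / (1 - ℓ α) := by
      refine div_le_div₀ (mul_nonneg (mul_nonneg (mul_nonneg hγ0.le hKpos.le) hl0.le) (hκ l).le) ?_ hden hden2
      nlinarith [hκK l, hκ l, mul_pos hγ0 hl0]
    calc γ * κ l ^ 2 * ℓ α / (1 - ℓ α * (1 - γ * κ l ^ 2)) * |x - y|
        ≤ γ * K * ℓ α * κ l / (1 - ℓ α) * |x - y| :=
          mul_le_mul_of_nonneg_right hq (abs_nonneg _)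
      _ = M α * (κ l * |x - y|) := by rw [hMdef]; ring
  have hb1 : ∀ α, 0 < α → ∀ l (x : ℝ), |φ α (κ l) x| ≤ M α * (κ l * |x|) := by
    intro α hα l x
    have := key α hα l x 0
    simpa [h3 α hα (κ l) (hκ l)] using this
  have hmem : ∀ α : ℝ, 0 < α → ∀ z : lp (fun _ : Λ => ℝ) 2,
      Memℓp (fun l => φ α (κ l) (z l) / κ l) 2 := by
    intro α hα z
    refine memlp_two_of_abs_le ((lp.memℓp z).const_mul (M α)) (fun l => ?_)
    rw [abs_div, abs_of_pos (hκ l), div_le_iff₀ (hκ l), abs_mul,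
      abs_of_nonneg (hMnn α hα)]
    calc |φ α (κ l) (z l)| ≤ M α * (κ l * |z l|) := hb1 α hα l (z l)
      _ = M α * |z l| * κ l := by ring
  -- norm estimate for differences of reconstructions
  have hnorm : ∀ (α : ℝ) (hα : 0 < α) (u v : lp (fun _ : Λ => ℝ) 2),
      ‖(⟨fun l => φ α (κ l) (u l) / κ l, hmem α hα u⟩ : lp (fun _ : Λ => ℝ) 2) -
        (⟨fun l => φ α (κ l) (v l) / κ l, hmem α hα v⟩ : lp (fun _ : Λ => ℝ) 2)‖ ≤
        M α * ‖u - v‖ := by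
    intro α hα u v
    have hsm : ‖M α • (u - v)‖ = M α * ‖u - v‖ := by
      rw [norm_smul, Real.norm_eq_abs, abs_of_nonneg (hMnn α hα)]
    rw [← hsm]
    refine lp_norm_le_of_abs_le _ _ (fun l => ?_)
    have e1 : ((⟨fun l => φ α (κ l) (u l) / κ l, hmem α hα u⟩ : lp (fun _ : Λ => ℝ) 2) -
        (⟨fun l => φ α (κ l) (v l) / κ l, hmem α hα v⟩ : lp (fun _ : Λ => ℝ) 2)) l =
        φ α (κ l) (u l) / κ l - φ α (κ l) (v l) / κ l := by
      rw [lp.coeFn_sub]; rfl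
    have e2 : (M α • (u - v)) l = M α * (u l - v l) := by
      rw [lp.coeFn_smul, Pi.smul_apply, lp.coeFn_sub]; rfl
    rw [e1, e2, div_sub_div_same, abs_div, abs_of_pos (hκ l), div_le_iff₀ (hκ l),
      abs_mul, abs_of_nonneg (hMnn α hα)]
    calc |φ α (κ l) (u l) - φ α (κ l) (v l)| ≤ M α * (κ l * |u l - v l|) := key α hα l _ _
      _ = M α * |u l - v l| * κ l := by ring
  refine ⟨hmem, ?_, ?_⟩
  · -- Stability
    intro α hα z zk htend
    refine squeeze_zero (fun k => norm_nonneg _) (fun k => hnorm α hα (zk k) z) ?_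
    simpa using htend.const_mul (M α)
  · -- Convergence
    intro z cplus hz hw zk δ αs hαpos hδle hδ0 hαs0 hcex w
    obtain ⟨c, hc0, hcineq⟩ := hcex
    have hδnn : ∀ k, 0 ≤ δ k := fun k => (norm_nonneg _).trans (hδle k)
    set X : ℕ → lp (fun _ : Λ => ℝ) 2 := fun k =>
      (⟨fun l => φ (αs k) (κ l) (zk k l) / κ l, hmem (αs k) (hαpos k) (zk k)⟩ :
        lp (fun _ : Λ => ℝ) 2) with hXdef
    set Y : ℕ → lp (fun _ : Λ => ℝ) 2 := fun k =>
      (⟨fun l => φ (αs k) (κ l) (z l) / κ l, hmem (αs k) (hαpos k) z⟩ :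
        lp (fun _ : Λ => ℝ) 2) with hYdef
    show Tendsto (fun k => ⟪X k, w⟫) atTop (nhds ⟪cplus, w⟫)
    have hXapp : ∀ k l, X k l = φ (αs k) (κ l) (zk k l) / κ l := fun k l => rfl
    have hYapp : ∀ k l, Y k l = φ (αs k) (κ l) (z l) / κ l := fun k l => rfl
    have hcplus : ∀ l, cplus l = z l / κ l := fun l => by
      rw [hz l, mul_comm, mul_div_assoc, div_self (hκ l).ne', mul_one]
    -- bound on M (αs k) * δ k
    have hMd : ∀ k, M (αs k) * δ k ≤ γ * K / c := by
      intro k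
      obtain ⟨hl0, hl1⟩ := hℓ _ (hαpos k)
      have hden : (0:ℝ) < 1 - ℓ (αs k) := by linarith
      have h := hcineq k
      rw [le_div_iff₀ hl0] at h
      show γ * K * ℓ (αs k) / (1 - ℓ (αs k)) * δ k ≤ γ * K / c
      rw [div_mul_eq_mul_div, div_le_div_iff₀ hden hc0]
      nlinarith [mul_le_mul_of_nonneg_left h (mul_nonneg hγ0.le hKpos.le)]
    -- boundedness
    have hXY : ∀ k, ‖X k - Y k‖ ≤ γ * K / c := by
      intro k
      refine le_trans (hnorm (αs k) (hαpos k) (zk k) z) (le_trans ?_ (hMd k))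
      exact mul_le_mul_of_nonneg_left (hδle k) (hMnn _ (hαpos k))
    have hY : ∀ k, ‖Y k‖ ≤ ‖cplus‖ := by
      intro k
      refine lp_norm_le_of_abs_le _ _ (fun l => ?_)
      rw [hYapp k l, abs_div, abs_of_pos (hκ l), div_le_iff₀ (hκ l)]
      have hne : |φ (αs k) (κ l) (z l)| ≤ |z l| := by
        have := h2 (αs k) (hαpos k) (κ l) (hκ l) (z l) 0
        simpa [h3 (αs k) (hαpos k) (κ l) (hκ l)] using this
      calc |φ (αs k) (κ l) (z l)| ≤ |z l| := hne
        _ = |cplus l| * κ l := by rw [hz l, abs_mul, abs_of_pos (hκ l)]; ring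
    set B := 2 * ‖cplus‖ + γ * K / c with hBdef
    have hgKc : (0:ℝ) ≤ γ * K / c := div_nonneg (mul_nonneg hγ0.le hKpos.le) hc0.le
    have hB0 : 0 ≤ B := by
      have := norm_nonneg cplus
      rw [hBdef]; linarith
    have hB : ∀ k, ‖X k - cplus‖ ≤ B := by
      intro k
      calc ‖X k - cplus‖ = ‖(X k - Y k) + (Y k - cplus)‖ := by rw [sub_add_sub_cancel]
        _ ≤ ‖X k - Y k‖ + ‖Y k - cplus‖ := norm_add_le _ _
        _ ≤ γ * K / c + (‖Y k‖ + ‖cplus‖) := add_le_add (hXY k) (norm_sub_le _ _)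
        _ ≤ γ * K / c + (‖cplus‖ + ‖cplus‖) := by
            have := hY k; linarith
        _ = B := by rw [hBdef]; ring
    -- coordinatewise convergence
    have hpt : ∀ l, Tendsto (fun k => X k l - cplus l) atTop (nhds 0) := by
      intro l
      have hαs' : Tendsto αs atTop (nhdsWithin 0 (Set.Ioi 0)) :=
        tendsto_nhdsWithin_of_tendsto_nhds_of_eventually_within _ hαs0
          (Eventually.of_forall fun k => hαpos k)
      have hφz : Tendsto (fun k => φ (αs k) (κ l) (z l)) atTop (nhds (z l)) :=
        (h4 (κ l) (hκ l) (z l)).comp hαs'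
      have t1 : Tendsto (fun k => δ k / κ l) atTop (nhds 0) := by
        simpa using hδ0.div_const (κ l)
      have t2 : Tendsto (fun k => |φ (αs k) (κ l) (z l) - z l| / κ l) atTop (nhds 0) := by
        have hsub : Tendsto (fun k => φ (αs k) (κ l) (z l) - z l) atTop (nhds 0) :=
          tendsto_sub_nhds_zero_iff.mpr hφz
        have := hsub.abs.div_const (κ l)
        simpa using this
      have hg : Tendsto (fun k => δ k / κ l + |φ (αs k) (κ l) (z l) - z l| / κ l)
          atTop (nhds 0) := by
        simpa using t1.add t2
      refine squeeze_zero_norm (fun k => ?_) hg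
      rw [Real.norm_eq_abs]
      have e1 : X k l - cplus l =
          (φ (αs k) (κ l) (zk k l) - φ (αs k) (κ l) (z l)) / κ l +
          (φ (αs k) (κ l) (z l) - z l) / κ l := by
        rw [hXapp k l, hcplus l]; ring
      rw [e1]
      refine le_trans (abs_add_le _ _) ?_
      have hzkz : |zk k l - z l| ≤ δ k := by
        have h' := lp.norm_apply_le_norm (by norm_num : (2:ℝ≥0∞) ≠ 0) (zk k - z) l
        rw [lp.coeFn_sub, Pi.sub_apply, Real.norm_eq_abs] at h'
        exact h'.trans (hδle k)
      have hfirst : |(φ (αs k) (κ l) (zk k l) - φ (αs k) (κ l) (z l)) / κ l| ≤ δ k / κ l := by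
        rw [abs_div, abs_of_pos (hκ l)]
        exact (div_le_div_iff_of_pos_right (hκ l)).mpr ((h2 (αs k) (hαpos k) (κ l) (hκ l) _ _).trans hzkz)
      have hsecond : |(φ (αs k) (κ l) (z l) - z l) / κ l| =
          |φ (αs k) (κ l) (z l) - z l| / κ l := by
        rw [abs_div, abs_of_pos (hκ l)]
      exact add_le_add hfirst (le_of_eq hsecond)
    -- weak convergence
    rw [← tendsto_sub_nhds_zero_iff]
    have heq : (fun k => ⟪X k, w⟫ - ⟪cplus, w⟫) = fun k => ⟪X k - cplus, w⟫ := by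
      funext k; rw [inner_sub_left]
    rw [heq]
    rw [Metric.tendsto_atTop]
    intro ε hε
    have hB1 : (0:ℝ) < 2 * (B + 1) := by linarith
    have hε' : 0 < ε / (2 * (B + 1)) := div_pos hε hB1
    have hsum : HasSum (fun l => lp.single 2 l (w l)) w := lp.hasSum_single ENNReal.ofNat_ne_top w
    obtain ⟨F, hF⟩ := (Metric.tendsto_nhds.mp hsum _ hε').exists
    have hfin : Tendsto (fun k => ∑ l ∈ F, (X k l - cplus l) * w l) atTop (nhds 0) := by
      have : Tendsto (fun k => ∑ l ∈ F, (X k l - cplus l) * w l) atTop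
          (nhds (∑ l ∈ F, (0:ℝ) * w l)) :=
        tendsto_finset_sum F (fun l _ => (hpt l).mul_const (w l))
      simpa using this
    obtain ⟨N, hN⟩ := Metric.tendsto_atTop.mp hfin (ε / 2) (half_pos hε)
    refine ⟨N, fun k hk => ?_⟩
    have husub : ∀ l, (X k - cplus) l = X k l - cplus l := by
      intro l; rw [lp.coeFn_sub]; rfl
    have hsplit : ⟪X k - cplus, w⟫ =
        (∑ l ∈ F, (X k l - cplus l) * w l) + ⟪X k - cplus, w - ∑ l ∈ F, lp.single 2 l (w l)⟫ := by
      have h' : ⟪X k - cplus, (∑ l ∈ F, lp.single 2 l (w l)) +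
          (w - ∑ l ∈ F, lp.single 2 l (w l))⟫ = ⟪X k - cplus, w⟫ := by
        rw [add_sub_cancel]
      rw [← h', inner_add_right, inner_sum]
      congr 1
      refine Finset.sum_congr rfl fun l _ => ?_
      rw [lp.inner_single_right]
      simp [RCLike.inner_apply, husub l]; ring
    have htail : |⟪X k - cplus, w - ∑ l ∈ F, lp.single 2 l (w l)⟫| ≤ ε / 2 := by
      refine le_trans (abs_real_inner_le_norm _ _) ?_
      have hwF : ‖w - ∑ l ∈ F, lp.single 2 l (w l)‖ ≤ ε / (2 * (B + 1)) := by
        rw [← dist_eq_norm, dist_comm]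
        exact hF.le
      calc ‖X k - cplus‖ * ‖w - ∑ l ∈ F, lp.single 2 l (w l)‖ ≤ B * (ε / (2 * (B + 1))) :=
            mul_le_mul (hB k) hwF (norm_nonneg _) hB0
        _ ≤ ε / 2 := by
            rw [mul_div_assoc', div_le_div_iff₀ hB1 (by norm_num : (0:ℝ) < 2)]
            nlinarith
    have hhead : |∑ l ∈ F, (X k l - cplus l) * w l| < ε / 2 := by
      have := hN k hk
      rwa [Real.dist_eq, sub_zero] at this
    rw [Real.dist_eq, sub_zero, hsplit]
    calc |(∑ l ∈ F, (X k l - cplus l) * w l) +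
          ⟪X k - cplus, w - ∑ l ∈ F, lp.single 2 l (w l)⟫| ≤
          |∑ l ∈ F, (X k l - cplus l) * w l| +
          |⟪X k - cplus, w - ∑ l ∈ F, lp.single 2 l (w l)⟫| := abs_add_le _ _
      _ < ε / 2 + ε / 2 := by
          have := htail; have := hhead; linarith
      _ = ε := by ring
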